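/- Let h : ℝ → ℝ be twice differentiable, k ∈ ℝ, a₃(u) = (−h(u)·cos u + h'(u)·sin u, −h(u)·sin u − h'(u)·cos u, 0), and g(u, v) = a₃(u) + v·(k·cos u, k·sin u, 1). Then for all u, v ∈ ℝ, the cross product of the partial derivatives of g satisfies ∂g/∂u × ∂g/∂v = (h(u) + h''(u) − v·k) · (−cos u, −sin u, k); in particular, wherever g is regular, its surface normal direction is parallel to (cos u, sin u, −k). -/

import Mathlib

open Real

/-- The standard cross product on `ℝ³ = ℝ × ℝ × ℝ`. -/
def cross (a b : ℝ × ℝ × ℝ) : ℝ × ℝ × ℝ :=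
  (a.2.1 * b.2.2 - a.2.2 * b.2.1,
   a.2.2 * b.1 - a.1 * b.2.2,
   a.1 * b.2.1 - a.2.1 * b.1)

/-- For a twice differentiable support function `h` and conical curvature `k`, the
constant-slope surface `g(u,v) = a₃(u) + v·(k·cos u, k·sin u, 1)` satisfies
`∂g/∂u × ∂g/∂v = (h(u) + h''(u) − v·k) • (−cos u, −sin u, k)`; in particular, wherever `g`
is regular, its surface normal direction is parallel to `(cos u, sin u, −k)`. -/
theorem constant_slope_surface_cross_product_of_partials
    (h : ℝ → ℝ) (hh : Differentiable ℝ h) (hh' : Differentiable ℝ (deriv h)) (k : ℝ)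
    (a₃ : ℝ → ℝ × ℝ × ℝ)
    (ha₃ : a₃ = fun u => (-h u * Real.cos u + deriv h u * Real.sin u,
                          -h u * Real.sin u - deriv h u * Real.cos u, 0))
    (g : ℝ → ℝ → ℝ × ℝ × ℝ)
    (hg : g = fun u v => a₃ u + v • (k * Real.cos u, k * Real.sin u, (1 : ℝ)))
    (u v : ℝ) :
    cross (deriv (fun t => g t v) u) (deriv (fun t => g u t) v) =
      (h u + deriv (deriv h) u - v * k) • (-Real.cos u, -Real.sin u, k) := by
  subst ha₃ hg
  have hhu : HasDerivAt h (deriv h u) u := (hh u).hasDerivAt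
  have hh'u : HasDerivAt (deriv h) (deriv (deriv h) u) u := (hh' u).hasDerivAt
  have hcos := Real.hasDerivAt_cos u
  have hsin := Real.hasDerivAt_sin u
  set A := h u + deriv (deriv h) u - v * k with hA
  have h1 : HasDerivAt (fun t => -h t * Real.cos t + deriv h t * Real.sin t
      + v * (k * Real.cos t)) (A * Real.sin u) u := by
    have := ((hhu.neg.mul hcos).add (hh'u.mul hsin)).add ((hcos.const_mul k).const_mul v)
    refine this.congr_deriv ?_
    simp [hA]; ring
  have h2 : HasDerivAt (fun t => -h t * Real.sin t - deriv h t * Real.cos t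
      + v * (k * Real.sin t)) (-(A * Real.cos u)) u := by
    have := ((hhu.neg.mul hsin).sub (hh'u.mul hcos)).add ((hsin.const_mul k).const_mul v)
    refine this.congr_deriv ?_
    simp [hA]; ring
  have h3 : HasDerivAt (fun t : ℝ => (0 : ℝ) + v * 1) 0 u := hasDerivAt_const _ _
  have Hu : HasDerivAt (fun t =>
      ((-h t * Real.cos t + deriv h t * Real.sin t,
        -h t * Real.sin t - deriv h t * Real.cos t, (0 : ℝ)))
      + v • (k * Real.cos t, k * Real.sin t, (1 : ℝ)))
      (A * Real.sin u, -(A * Real.cos u), 0) u := h1.prodMk (h2.prodMk h3)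
  have Hv : HasDerivAt (fun t : ℝ =>
      ((-h u * Real.cos u + deriv h u * Real.sin u,
        -h u * Real.sin u - deriv h u * Real.cos u, (0 : ℝ)))
      + t • (k * Real.cos u, k * Real.sin u, (1 : ℝ)))
      (k * Real.cos u, k * Real.sin u, (1 : ℝ)) v := by
    have := ((hasDerivAt_id v).smul_const (k * Real.cos u, k * Real.sin u, (1 : ℝ))).const_add
      ((-h u * Real.cos u + deriv h u * Real.sin u,
        -h u * Real.sin u - deriv h u * Real.cos u, (0 : ℝ)))
    simpa using this
  rw [Hu.deriv, Hv.deriv]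
  simp only [cross, Prod.smul_mk, smul_eq_mul, Prod.mk.injEq]
  refine ⟨by ring, by ring, ?_⟩
  linear_combination (A * k) * Real.sin_sq_add_cos_sq u
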